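/- The modified κ-entanglement Ẽ_κ is monotone under channels N that are both PPT and non-entangling: Ẽ_κ(N(ρ)) ≤ Ẽ_κ(ρ). The key step: if S is feasible for ρ (i.e., S^Γ ± ρ^Γ ≥ 0, S ∈ cone(S)), then T := N(S) is feasible for N(ρ), since T^Γ ± N(ρ)^Γ = (Γ∘N∘Γ)(S^Γ ± ρ^Γ) ≥ 0 by complete positivity of Γ∘N∘Γ, and T ∈ cone(S) since N is non-entangling; moreover Tr T = Tr S. -/

import Mathlib

open Matrix BigOperators
open scoped Kronecker ComplexOrder

noncomputable section

abbrev BOp (d : ℕ) := Matrix (Fin d × Fin d) (Fin d × Fin d) ℂ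

/-- Loewner order: `A ≤ B` iff `B - A` is positive semidefinite. -/
def loe {n : Type*} [Fintype n] (A B : Matrix n n ℂ) : Prop := (B - A).PosSemidef

/-- A density operator: positive semidefinite with unit trace. -/
def IsState {n : Type*} [Fintype n] [DecidableEq n] (ρ : Matrix n n ℂ) : Prop :=
  ρ.PosSemidef ∧ ρ.trace = 1

/-- Separable bipartite state (convex combination of product states). -/
def IsSep {a b : Type*} [Fintype a] [DecidableEq a] [Fintype b] [DecidableEq b]
    (ρ : Matrix (a × b) (a × b) ℂ) : Prop :=
  ∃ (m : ℕ) (p : Fin m → ℝ) (A : Fin m → Matrix a a ℂ) (B : Fin m → Matrix b b ℂ),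
    (∀ i, 0 ≤ p i) ∧ (∑ i, p i) = 1 ∧
    (∀ i, IsState (A i)) ∧ (∀ i, IsState (B i)) ∧
    ρ = ∑ i, ((p i : ℝ) : ℂ) • (A i ⊗ₖ B i)

/-- The cone generated by separable states. -/
def InSepCone {a b : Type*} [Fintype a] [DecidableEq a] [Fintype b] [DecidableEq b]
    (S : Matrix (a × b) (a × b) ℂ) : Prop :=
  ∃ (c : ℝ) (σ : Matrix (a × b) (a × b) ℂ), 0 ≤ c ∧ IsSep σ ∧ S = ((c : ℝ) : ℂ) • σ

/-- Maximally entangled state `Φ_d` on `ℂ^d ⊗ ℂ^d`. -/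
def PhiME (d : ℕ) : BOp d := fun p q => if p.1 = p.2 ∧ q.1 = q.2 then ((1 : ℂ) / d) else 0

/-- `τ_d = (𝟙 - Φ_d)/(d² - 1)`. -/
def tauME (d : ℕ) : BOp d := (((d : ℂ)^2 - 1))⁻¹ • (1 - PhiME d)

/-- Partial transpose on the second tensor factor. -/
def pt {a b : Type*} (A : Matrix (a × b) (a × b) ℂ) : Matrix (a × b) (a × b) ℂ :=
  fun p q => A (p.1, q.2) (q.1, p.2)

/-- Total positive-semidefinite square root (junk value `0` off the PSD cone). -/
noncomputable def msqrt {n : Type*} [Fintype n] [DecidableEq n] (A : Matrix n n ℂ) :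
    Matrix n n ℂ :=
  open scoped Classical in
  if h : A.PosSemidef then
    h.1.eigenvectorUnitary.1 * diagonal ((↑) ∘ Real.sqrt ∘ h.1.eigenvalues) *
      (star h.1.eigenvectorUnitary : Matrix n n ℂ)
  else 0

/-- Trace norm `‖A‖₁ = Tr √(AᴴA)`. -/
noncomputable def traceNorm {n : Type*} [Fintype n] [DecidableEq n] (A : Matrix n n ℂ) : ℝ :=
  (msqrt (Aᴴ * A)).trace.re


/-- Modified κ-entanglement `Ẽ_κ(ρ) = log₂ min{Tr S : -S ≤ ρ^Γ ≤ S, S ∈ cone(S)}`. -/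
noncomputable def Ekappa {a b : Type*} [Fintype a] [DecidableEq a] [Fintype b] [DecidableEq b]
    (ρ : Matrix (a × b) (a × b) ℂ) : ℝ :=
  Real.logb 2
    (sInf {t : ℝ | ∃ S, InSepCone S ∧ loe (-S) (pt ρ) ∧ loe (pt ρ) S ∧ t = S.trace.re})

/-- Complete positivity, via the existence of a Kraus representation. -/
def IsCPfun {n m : Type*} [Fintype n] [Fintype m]
    (f : Matrix n n ℂ → Matrix m m ℂ) : Prop :=
  ∃ (k : ℕ) (K : Fin k → Matrix m n ℂ), ∀ X, f X = ∑ i, K i * X * (K i)ᴴ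

/- ## Auxiliary lemmas -/

lemma pt_pt {a b : Type*} (A : Matrix (a × b) (a × b) ℂ) : pt (pt A) = A := by
  funext p q; simp [pt]

lemma pt_trace {a b : Type*} [Fintype a] [Fintype b] (A : Matrix (a × b) (a × b) ℂ) :
    (pt A).trace = A.trace := by
  simp [Matrix.trace, Matrix.diag, pt]

lemma pt_add {a b : Type*} (A B : Matrix (a × b) (a × b) ℂ) :
    pt (A + B) = pt A + pt B := by
  funext p q; simp [pt]

lemma pt_smul {a b : Type*} (c : ℂ) (A : Matrix (a × b) (a × b) ℂ) :
    pt (c • A) = c • pt A := by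
  funext p q; simp [pt]

lemma pt_kron {a b : Type*} [Fintype a] [Fintype b] (A : Matrix a a ℂ) (B : Matrix b b ℂ) :
    pt (A ⊗ₖ B) = A ⊗ₖ Bᵀ := by
  funext p q; simp [pt, Matrix.kroneckerMap_apply]

lemma pt_sum {a b : Type*} {ι : Type*} (s : Finset ι) (f : ι → Matrix (a × b) (a × b) ℂ) :
    pt (∑ i ∈ s, f i) = ∑ i ∈ s, pt (f i) := by
  funext p q
  simp [pt, Matrix.sum_apply]

lemma trace_nonneg_of_psd {n : Type*} [Fintype n] [DecidableEq n] {A : Matrix n n ℂ}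
    (hA : A.PosSemidef) : 0 ≤ A.trace := by
  exact hA.trace_nonneg

lemma psd_sum {n : Type*} [Fintype n] {ι : Type*} (s : Finset ι) (f : ι → Matrix n n ℂ)
    (h : ∀ i ∈ s, (f i).PosSemidef) : (∑ i ∈ s, f i).PosSemidef := by
  classical
  induction s using Finset.induction_on with
  | empty => simpa using Matrix.PosSemidef.zero
  | insert a s hni ih =>
    rw [Finset.sum_insert hni]
    exact (h a (Finset.mem_insert_self a s)).add
      (ih fun i hi => h i (Finset.mem_insert_of_mem hi))

lemma isSep_pt {a b : Type*} [Fintype a] [DecidableEq a] [Fintype b] [DecidableEq b]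
    {σ : Matrix (a × b) (a × b) ℂ} (h : IsSep σ) : IsSep (pt σ) := by
  obtain ⟨m, p, A, B, hp, hps, hA, hB, hsum⟩ := h
  refine ⟨m, p, A, fun i => (B i)ᵀ, hp, hps, hA, ?_, ?_⟩
  · intro i
    exact ⟨(hB i).1.transpose, by rw [Matrix.trace_transpose]; exact (hB i).2⟩
  · rw [hsum, pt_sum]
    simp only [pt_smul, pt_kron]

lemma isHermitian_pt {a b : Type*} {A : Matrix (a × b) (a × b) ℂ}
    (hA : A.IsHermitian) : (pt A).IsHermitian := by
  funext p q
  have := congrFun (congrFun hA (p.1, q.2)) (q.1, p.2)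
  simpa [pt, Matrix.conjTranspose_apply] using this

lemma exists_smul_one_psd {n : Type*} [Fintype n] [DecidableEq n] {A : Matrix n n ℂ}
    (hA : A.IsHermitian) :
    ∃ c : ℝ, 0 ≤ c ∧ ((c : ℂ) • 1 - A).PosSemidef ∧ ((c : ℂ) • 1 + A).PosSemidef := by
  set c : ℝ := ∑ i, |hA.eigenvalues i| with hc
  have hcnn : 0 ≤ c := Finset.sum_nonneg fun i _ => abs_nonneg _
  have hbound : ∀ j, |hA.eigenvalues j| ≤ c := by
    intro j; rw [hc]
    exact Finset.single_le_sum (f := fun i => |hA.eigenvalues i|)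
      (fun i _ => abs_nonneg _) (Finset.mem_univ j)
  set U : Matrix n n ℂ := (hA.eigenvectorUnitary : Matrix n n ℂ) with hU
  have hUU : U * Uᴴ = 1 := by
    rw [← Matrix.star_eq_conjTranspose]
    exact (Matrix.mem_unitaryGroup_iff).mp hA.eigenvectorUnitary.2
  have hspec : A = U * Matrix.diagonal (RCLike.ofReal ∘ hA.eigenvalues) * Uᴴ := by
    rw [hU, ← Matrix.star_eq_conjTranspose]
    exact hA.spectral_theorem
  have hone : (c : ℂ) • (1 : Matrix n n ℂ) =
      U * Matrix.diagonal (fun _ => (c : ℂ)) * Uᴴ := by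
    rw [← Matrix.smul_one_eq_diagonal, Matrix.mul_smul, Matrix.smul_mul, Matrix.mul_one, hUU]
  refine ⟨c, hcnn, ?_, ?_⟩
  · have h1 : (c : ℂ) • (1 : Matrix n n ℂ) - A =
        U * Matrix.diagonal (fun i => ((c - hA.eigenvalues i : ℝ) : ℂ)) * Uᴴ := by
      conv_lhs => rw [hone, hspec]
      rw [← Matrix.sub_mul, ← Matrix.mul_sub, Matrix.diagonal_sub]
      congr 1
      ext i
      simp
    rw [h1]
    refine Matrix.PosSemidef.mul_mul_conjTranspose_same ?_ U
    rw [Matrix.posSemidef_diagonal_iff]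
    intro i
    rw [Complex.zero_le_real]
    have := abs_le.mp (hbound i)
    linarith
  · have h1 : (c : ℂ) • (1 : Matrix n n ℂ) + A =
        U * Matrix.diagonal (fun i => ((c + hA.eigenvalues i : ℝ) : ℂ)) * Uᴴ := by
      conv_lhs => rw [hone, hspec]
      rw [← Matrix.add_mul, ← Matrix.mul_add, Matrix.diagonal_add]
      congr 1
      ext i
      simp
    rw [h1]
    refine Matrix.PosSemidef.mul_mul_conjTranspose_same ?_ U
    rw [Matrix.posSemidef_diagonal_iff]
    intro i
    rw [Complex.zero_le_real]
    have := abs_le.mp (hbound i)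
    linarith

lemma isState_std {n : Type*} [Fintype n] [DecidableEq n] (i : n) :
    IsState (Matrix.single i i 1 : Matrix n n ℂ) := by
  have hd : (Matrix.single i i 1 : Matrix n n ℂ) =
      Matrix.diagonal (Pi.single i 1) := by
    ext p q
    by_cases h : p = q
    · subst h
      by_cases h2 : i = p <;> simp [Matrix.single, Matrix.diagonal_apply,
        Pi.single_apply, h2]
    · by_cases h2 : i = p <;> simp [Matrix.single, Matrix.diagonal_apply,
        Pi.single_apply, h2, h, Ne.symm h]

  constructor
  · rw [hd]
    refine Matrix.PosSemidef.diagonal ?_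
    intro j
    by_cases h : i = j <;> simp [Pi.single_apply, h]
  · rw [hd, Matrix.trace_diagonal]
    simp [Pi.single_apply]

lemma isSep_smul_one {a b : Type*} [Fintype a] [DecidableEq a] [Fintype b] [DecidableEq b]
    [Nonempty a] [Nonempty b] :
    IsSep ((((Fintype.card (a × b) : ℝ)⁻¹ : ℝ) : ℂ) • (1 : Matrix (a × b) (a × b) ℂ)) := by
  set m := Fintype.card (a × b) with hm
  have hm0 : 0 < m := Fintype.card_pos
  set e : Fin m ≃ a × b := (Fintype.equivFin (a × b)).symm with he
  refine ⟨m, fun _ => (m : ℝ)⁻¹,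
    fun i => Matrix.single (e i).1 (e i).1 1,
    fun i => Matrix.single (e i).2 (e i).2 1,
    fun _ => by positivity, ?_, fun i => isState_std _, fun i => isState_std _, ?_⟩
  · rw [Finset.sum_const, Finset.card_univ, Fintype.card_fin, nsmul_eq_mul]
    field_simp
  · rw [← Finset.smul_sum]
    congr 1
    have key : ∑ z : a × b,
        (Matrix.single z.1 z.1 1 ⊗ₖ Matrix.single z.2 z.2 1
          : Matrix (a × b) (a × b) ℂ) = 1 := by
      ext ⟨pa, pb⟩ ⟨qa, qb⟩
      simp only [Matrix.sum_apply, Matrix.kroneckerMap_apply, Matrix.single,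
        Matrix.one_apply, Fintype.sum_prod_type, Matrix.of_apply, Prod.mk.injEq]
      rw [Finset.sum_comm]
      simp [ite_and, Finset.sum_ite_eq, eq_comm]
      aesop
    rw [← key, ← Equiv.sum_comp e
      (fun z : a × b => (Matrix.single z.1 z.1 1 ⊗ₖ Matrix.single z.2 z.2 1
        : Matrix (a × b) (a × b) ℂ))]

lemma cp_psd {n m : Type*} [Fintype n] [Fintype m] {f : Matrix n n ℂ → Matrix m m ℂ}
    (hf : IsCPfun f) {X : Matrix n n ℂ} (hX : X.PosSemidef) : (f X).PosSemidef := by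
  obtain ⟨k, K, hK⟩ := hf
  rw [hK]
  exact psd_sum _ _ fun i _ => hX.mul_mul_conjTranspose_same (K i)

lemma cp_add {n m : Type*} [Fintype n] [Fintype m] {f : Matrix n n ℂ → Matrix m m ℂ}
    (hf : IsCPfun f) (X Y : Matrix n n ℂ) : f (X + Y) = f X + f Y := by
  obtain ⟨k, K, hK⟩ := hf
  simp [hK, Matrix.mul_add, Matrix.add_mul, Finset.sum_add_distrib]

lemma cp_sub {n m : Type*} [Fintype n] [Fintype m] {f : Matrix n n ℂ → Matrix m m ℂ}
    (hf : IsCPfun f) (X Y : Matrix n n ℂ) : f (X - Y) = f X - f Y := by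
  obtain ⟨k, K, hK⟩ := hf
  simp [hK, Matrix.mul_sub, Matrix.sub_mul, Finset.sum_sub_distrib]

lemma cp_smul {n m : Type*} [Fintype n] [Fintype m] {f : Matrix n n ℂ → Matrix m m ℂ}
    (hf : IsCPfun f) (c : ℂ) (X : Matrix n n ℂ) : f (c • X) = c • f X := by
  obtain ⟨k, K, hK⟩ := hf
  simp [hK, Matrix.mul_smul, Matrix.smul_mul, Finset.smul_sum]

theorem stmt9 {a b a' b' : Type*}
    [Fintype a] [DecidableEq a] [Fintype b] [DecidableEq b]
    [Fintype a'] [DecidableEq a'] [Fintype b'] [DecidableEq b']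
    (N : Matrix (a × b) (a × b) ℂ → Matrix (a' × b') (a' × b') ℂ)
    (hCP : IsCPfun N) (hTP : ∀ X, (N X).trace = X.trace)
    (hPPT : IsCPfun (fun X => pt (N (pt X))))
    (hNE : ∀ σ : Matrix (a × b) (a × b) ℂ, IsSep σ → IsSep (N σ))
    (ρ : Matrix (a × b) (a × b) ℂ) (hρ : IsState ρ) :
    Ekappa (N ρ) ≤ Ekappa ρ := by
  cases isEmpty_or_nonempty (a × b) with
  | inl hempty =>
    exfalso
    have h0 : ρ.trace = 0 := by simp [Matrix.trace]
    rw [hρ.2] at h0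
    exact one_ne_zero h0
  | inr hne =>
  obtain ⟨x0, y0⟩ := hne.some
  haveI : Nonempty a := ⟨x0⟩
  haveI : Nonempty b := ⟨y0⟩
  set P : Set ℝ :=
    {t : ℝ | ∃ S, InSepCone S ∧ loe (-S) (pt ρ) ∧ loe (pt ρ) S ∧ t = S.trace.re} with hP
  set Q : Set ℝ :=
    {t : ℝ | ∃ S, InSepCone S ∧ loe (-S) (pt (N ρ)) ∧ loe (pt (N ρ)) S ∧ t = S.trace.re}
    with hQ
  -- feasibility transfer: P ⊆ Q
  have hPQ : P ⊆ Q := by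
    rintro t ⟨S, hSep, h1, h2, rfl⟩
    refine ⟨pt (N (pt S)), ?_, ?_, ?_, ?_⟩
    · obtain ⟨c, σ, hc, hσ, rfl⟩ := hSep
      refine ⟨c, pt (N (pt σ)), hc, isSep_pt (hNE _ (isSep_pt hσ)), ?_⟩
      rw [pt_smul, cp_smul hCP, pt_smul]
    · show (pt (N ρ) - -(pt (N (pt S)))).PosSemidef
      rw [sub_neg_eq_add]
      have hkey : pt (N ρ) + pt (N (pt S)) = pt (N (pt (pt ρ + S))) := by
        have := cp_add hPPT (pt ρ) S
        rw [this, pt_pt]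
      rw [hkey]
      apply cp_psd hPPT
      have := h1
      rw [loe, sub_neg_eq_add] at this
      exact this
    · show (pt (N (pt S)) - pt (N ρ)).PosSemidef
      have hkey : pt (N (pt S)) - pt (N ρ) = pt (N (pt (S - pt ρ))) := by
        have := cp_sub hPPT S (pt ρ)
        rw [this, pt_pt]
      rw [hkey]
      exact cp_psd hPPT h2
    · rw [pt_trace, hTP, pt_trace]
  -- every feasible value for `N ρ` is at least 1
  have htrNρ : (N ρ).trace = 1 := by rw [hTP, hρ.2]
  have hQ1 : ∀ t ∈ Q, (1 : ℝ) ≤ t := by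
    rintro t ⟨S, _, _, h2, rfl⟩
    have hpsd : (S - pt (N ρ)).PosSemidef := h2
    have h0 : 0 ≤ (S - pt (N ρ)).trace := trace_nonneg_of_psd hpsd
    have htr : (S - pt (N ρ)).trace = S.trace - 1 := by
      rw [Matrix.trace_sub, pt_trace, htrNρ]
    rw [htr] at h0
    have := (Complex.le_def.mp h0).1
    simpa using this
  -- P is nonempty
  have hP_ne : P.Nonempty := by
    obtain ⟨c, hc, hpsd1, hpsd2⟩ := exists_smul_one_psd (isHermitian_pt hρ.1.1)
    set m := Fintype.card (a × b) with hm
    have hm0 : 0 < m := Fintype.card_pos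
    refine ⟨((c : ℂ) • (1 : Matrix (a × b) (a × b) ℂ)).trace.re,
      (c : ℂ) • 1, ⟨c * m, (((m : ℝ)⁻¹ : ℝ) : ℂ) • 1, by positivity, isSep_smul_one, ?_⟩,
      ?_, ?_, rfl⟩
    · rw [smul_smul]
      congr 1
      have hmne : (m : ℂ) ≠ 0 := Nat.cast_ne_zero.mpr hm0.ne'
      push_cast
      field_simp
    · show (pt ρ - -((c : ℂ) • 1)).PosSemidef
      rw [sub_neg_eq_add, add_comm]
      exact hpsd2
    · exact hpsd1
  have hQ_ne : Q.Nonempty := hP_ne.imp fun t ht => hPQ ht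
  have hbQ : BddBelow Q := ⟨1, fun t ht => hQ1 t ht⟩
  have hle : sInf Q ≤ sInf P := csInf_le_csInf hbQ hP_ne hPQ
  have h1Q : (1 : ℝ) ≤ sInf Q := le_csInf hQ_ne hQ1
  show Real.logb 2 (sInf Q) ≤ Real.logb 2 (sInf P)
  exact Real.logb_le_logb_of_le (by norm_num) (lt_of_lt_of_le zero_lt_one h1Q) hle

end
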